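/- Let (a,b) solve da/dt = (Pa/t)(b - 1/P), db/dt = (P/(2t))(1-b²) - (PQ/2)(1-a²) - Qb on a neighbourhood of t₀ > 0, with P(t) = √6√(2t²+2)/√(2t²+3), Q(t) = t/(t²+1). If a(t₀) > 0 and b(t₀) < 0, then the solution cannot be extended continuously backwards to a bounded solution on (0, t₀]; in fact a(t) ≥ a(t₀)t₀/t for all t ∈ (0, t₀] on which the solution exists. -/
import Mathlib

open Set Filter Topology

/-- Metric coefficient `P(t) = √6·√(2t²+2)/√(2t²+3)`. -/
noncomputable def Pfun (t : ℝ) : ℝ := Real.sqrt 6 * Real.sqrt (2 * t ^ 2 + 2) / Real.sqrt (2 * t ^ 2 + 3)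

/-- Metric coefficient `Q(t) = t/(t²+1)`. -/
noncomputable def Qfun (t : ℝ) : ℝ := t / (t ^ 2 + 1)

/-- `(a,b)` solves the invariant Spin(7) instanton system on the set `s`. -/
def SolvesSpin7 (a b : ℝ → ℝ) (s : Set ℝ) : Prop :=
  ∀ t ∈ s,
    HasDerivAt a (Pfun t * a t / t * (b t - 1 / Pfun t)) t ∧
    HasDerivAt b
      (Pfun t / (2 * t) * (1 - (b t) ^ 2) - Pfun t * Qfun t / 2 * (1 - (a t) ^ 2) - Qfun t * b t) t

lemma Pfun_pos (t : ℝ) : 0 < Pfun t := by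
  unfold Pfun
  have h1 : (0:ℝ) < 2 * t ^ 2 + 2 := by positivity
  have h2 : (0:ℝ) < 2 * t ^ 2 + 3 := by positivity
  positivity

/-- Barrier lemma: if `f t₀ < c` and whenever `f t = c` the derivative of `f` is positive,
then `f < c` on all of `(s, t₀]` (backwards persistence). -/
lemma barrier_aux {f : ℝ → ℝ} {s t₀ c : ℝ}
    (hcont : ∀ t ∈ Set.Ioc s t₀, ContinuousAt f t)
    (hder : ∀ t ∈ Set.Ioc s t₀, f t = c → ∃ d, HasDerivAt f d t ∧ 0 < d)
    (h0 : f t₀ < c) : ∀ t ∈ Set.Ioc s t₀, f t < c := by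
  by_contra hcon
  push_neg at hcon
  obtain ⟨τ, hτ, hfτ⟩ := hcon
  set A : Set ℝ := {t ∈ Set.Icc τ t₀ | c ≤ f t} with hA
  have hne : A.Nonempty := ⟨τ, ⟨le_refl _, hτ.2⟩, hfτ⟩
  have hbdd : BddAbove A := ⟨t₀, fun x hx => hx.1.2⟩
  set T := sSup A with hT
  have hTA : T ∈ closure A := csSup_mem_closure hne hbdd
  have hτT : τ ≤ T := le_csSup hbdd ⟨⟨le_refl _, hτ.2⟩, hfτ⟩
  have hTt₀ : T ≤ t₀ := csSup_le hne fun x hx => hx.1.2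
  have hTmem : T ∈ Set.Ioc s t₀ := ⟨lt_of_lt_of_le hτ.1 hτT, hTt₀⟩
  haveI hnb : (𝓝[A] T).NeBot := mem_closure_iff_nhdsWithin_neBot.mp hTA
  have hfT_ge : c ≤ f T := by
    refine ge_of_tendsto ((hcont T hTmem).continuousWithinAt (s := A)) ?_
    exact eventually_nhdsWithin_of_forall fun x hx => hx.2
  have hright : ∀ t, T < t → t ≤ t₀ → f t < c := by
    intro t h1 h2
    by_contra hge
    push_neg at hge
    have : t ∈ A := ⟨⟨le_trans hτT h1.le, h2⟩, hge⟩
    exact absurd (le_csSup hbdd this) (not_le.mpr h1)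
  have hTlt : T < t₀ := by
    rcases lt_or_eq_of_le hTt₀ with h | h
    · exact h
    · exact absurd (h ▸ hfT_ge) (not_le.mpr h0)
  have hfT_le : f T ≤ c := by
    have hev : ∀ᶠ t in 𝓝[>] T, f t ≤ c := by
      filter_upwards [eventually_mem_nhdsWithin,
        mem_nhdsWithin_of_mem_nhds (Iio_mem_nhds hTlt)] with t h1 h2
      exact (hright t h1 h2.le).le
    exact le_of_tendsto (((hcont T hTmem).tendsto).mono_left nhdsWithin_le_nhds) hev
  have hfTc : f T = c := le_antisymm hfT_le hfT_ge
  obtain ⟨d, hd, hdpos⟩ := hder T hTmem hfTc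
  have hslope : Filter.Tendsto (slope f T) (𝓝[>] T) (𝓝 d) :=
    (hasDerivAt_iff_tendsto_slope.mp hd).mono_left
      (nhdsWithin_mono _ fun x hx => hx.ne')
  have h1 : ∀ᶠ t in 𝓝[>] T, 0 < slope f T t :=
    hslope.eventually (eventually_gt_nhds hdpos)
  have h2 : ∀ᶠ t in 𝓝[>] T, t < t₀ :=
    mem_nhdsWithin_of_mem_nhds (Iio_mem_nhds hTlt)
  obtain ⟨t, ⟨hs1, hs2⟩, hs3⟩ :=
    ((h1.and h2).and eventually_mem_nhdsWithin).exists
  have htT : (0:ℝ) < t - T := sub_pos.mpr hs3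
  have hft : 0 < f t - f T := by
    have := mul_pos hs1 htT
    rw [slope_def_field, div_mul_cancel₀] at this
    · linarith
    · exact ne_of_gt htT
  have : c < f t := by rw [hfTc] at hft; linarith
  exact absurd (hright t hs3 hs2.le) (not_lt.mpr this.le)

/-- Backwards blowup: if `a(t₀) > 0` and `b(t₀) < 0`, then on any interval `(s, t₀]` on which
the solution exists one has `a(t) ≥ a(t₀)t₀/t`; in particular the solution cannot be extended
backwards to a bounded solution on `(0, t₀]`. -/
theorem spin7_backwards_blowup (a b : ℝ → ℝ) (s t₀ : ℝ)
    (hs : 0 ≤ s) (hst : s < t₀)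
    (hsol : SolvesSpin7 a b (Set.Ioc s t₀))
    (ha : 0 < a t₀) (hb : b t₀ < 0) :
    (∀ t ∈ Set.Ioc s t₀, a t₀ * t₀ / t ≤ a t) ∧
    (s = 0 → ¬ BddAbove (a '' Set.Ioc s t₀)) := by
  have ht₀mem : t₀ ∈ Set.Ioc s t₀ := ⟨hst, le_refl _⟩
  have htpos : ∀ t ∈ Set.Ioc s t₀, 0 < t := fun t ht => lt_of_le_of_lt hs ht.1
  -- Step 1 : b < 0 on (s, t₀]
  have hbneg : ∀ t ∈ Set.Ioc s t₀, b t < 0 := by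
    apply barrier_aux (c := 0)
    · intro t ht; exact (hsol t ht).2.differentiableAt.continuousAt
    · intro t ht hbt
      refine ⟨_, (hsol t ht).2, ?_⟩
      have htp := htpos t ht
      have hP := Pfun_pos t
      rw [hbt, Qfun]
      have hkey : Pfun t / (2 * t) * (1 - 0 ^ 2) -
          Pfun t * (t / (t ^ 2 + 1)) / 2 * (1 - a t ^ 2) - t / (t ^ 2 + 1) * 0
          = Pfun t * (1 + t ^ 2 * a t ^ 2) / (2 * t * (t ^ 2 + 1)) := by
        field_simp
        ring
      rw [hkey]
      positivity
    · exact hb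
  -- Step 2 : t * a t ≥ t₀ * a t₀ on (s, t₀]
  have hkey : ∀ t ∈ Set.Ioc s t₀, t₀ * a t₀ ≤ t * a t := by
    by_contra hcon
    push_neg at hcon
    obtain ⟨τ, hτ, hτlt⟩ := hcon
    have ht₀pos : 0 < t₀ := htpos t₀ ht₀mem
    have hh0 : 0 < t₀ * a t₀ := mul_pos ht₀pos ha
    set y : ℝ := (max (τ * a τ) 0 + t₀ * a t₀) / 2 with hy
    have hmaxlt : max (τ * a τ) 0 < t₀ * a t₀ := max_lt hτlt hh0
    have hy0 : 0 < y := by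
      have : (0:ℝ) ≤ max (τ * a τ) 0 := le_max_right _ _
      simp only [hy]; linarith
    have hyτ : τ * a τ < y := by
      have : τ * a τ ≤ max (τ * a τ) 0 := le_max_left _ _
      simp only [hy]; linarith
    have hyt₀ : y < t₀ * a t₀ := by simp only [hy]; linarith
    have hbar : ∀ t ∈ Set.Ioc s t₀, -(t * a t) < -y := by
      apply barrier_aux (c := -y)
      · intro t ht
        exact ((continuousAt_id.mul (hsol t ht).1.differentiableAt.continuousAt)).neg
      · intro t ht hft
        have htp := htpos t ht
        have hP := Pfun_pos t
        have hbt := hbneg t ht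
        have hat : t * a t = y := by linarith [neg_injective hft]
        have hapos : 0 < a t := by
          by_contra hle
          push_neg at hle
          nlinarith
        refine ⟨-(Pfun t * a t * b t), ?_, ?_⟩
        · have hder : HasDerivAt (fun u => u * a u)
              (1 * a t + t * (Pfun t * a t / t * (b t - 1 / Pfun t))) t :=
            (hasDerivAt_id t).mul (hsol t ht).1
          have heq : 1 * a t + t * (Pfun t * a t / t * (b t - 1 / Pfun t))
              = Pfun t * a t * b t := by
            field_simp
            ring
          rw [heq] at hder
          exact hder.neg
        · have : Pfun t * a t * b t < 0 := mul_neg_of_pos_of_neg (mul_pos hP hapos) hbt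
          linarith
      · linarith
    have := hbar τ hτ
    simp only [neg_lt_neg_iff] at this
    linarith
  constructor
  · intro t ht
    have htp := htpos t ht
    rw [div_le_iff₀ htp]
    nlinarith [hkey t ht]
  · intro hs0 hbdd
    obtain ⟨M, hM⟩ := hbdd
    have ht₀pos : 0 < t₀ := htpos t₀ ht₀mem
    set c : ℝ := t₀ * a t₀ with hc
    have hcpos : 0 < c := mul_pos ht₀pos ha
    set K : ℝ := max M 0 + 1 with hK
    have hKpos : 0 < K := by have := le_max_right M 0; simp only [hK]; linarith
    set t : ℝ := min t₀ (c / K) with ht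
    have htpos' : 0 < t := lt_min ht₀pos (div_pos hcpos hKpos)
    have htmem : t ∈ Set.Ioc s t₀ := by
      constructor
      · rw [hs0]; exact htpos'
      · exact min_le_left _ _
    have hige : c / t ≤ a t := by
      have := hkey t htmem
      rw [div_le_iff₀ htpos']
      nlinarith
    have hKle : K ≤ c / t := by
      have h1 : t ≤ c / K := min_le_right _ _
      rw [le_div_iff₀ htpos']
      calc K * t ≤ K * (c / K) := by nlinarith
        _ = c := by field_simp
    have haM : a t ≤ M := hM ⟨t, htmem, rfl⟩
    have : K ≤ M := le_trans hKle (le_trans hige haM)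
    have := le_max_left M 0
    simp only [hK] at *
    linarith
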